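/- Let μ, δ > 0 with δ < μ, ζ ∈ (0,1), and define φ₊(ω) = (1−ζ)log ω − (1−ζ)ω + ζ log(ω/(ω+αμ)) for ω > 0 and α > 0. Then φ₊ attains its maximum on (0,∞) at ω₀⁺ = (1/2)(1 − αμ + √((αμ−1)² + 4αμ/(1−ζ))), and the quantity ζ−1 − φ₊(ω₀⁺) − αζ(μ−δ) has Taylor expansion δζα − (μ²ζ/(2(1−ζ)))α² + O(α³) around α = 0; in particular it is strictly positive for all sufficiently small α > 0. -/

import Mathlib

open Filter Topology Asymptotics Set
set_option maxHeartbeats 1000000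


lemma log_taylor_bound {x : ℝ} (h0 : 0 ≤ x) (h1 : x ≤ 1/2) :
    |x - Real.log (1+x) - x^2/2| ≤ 2*x^3 := by
  have hx : |(-x)| < 1 := by rw [abs_neg, abs_of_nonneg h0]; linarith
  have h := Real.abs_log_sub_add_sum_range_le hx 2
  simp only [Finset.sum_range_succ, Finset.sum_range_zero] at h
  rw [abs_neg, abs_of_nonneg h0] at h
  push_cast at h
  have h2 : (1:ℝ) - (-x) = 1 + x := by ring
  rw [h2] at h
  have hnn : 0 ≤ x^3*(1-2*x) := mul_nonneg (pow_nonneg h0 3) (by linarith)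
  have h4 : x^3/(1-x) ≤ 2*x^3 := by
    rw [div_le_iff₀ (by linarith)]
    nlinarith [hnn]
  have h5 : |x - Real.log (1+x) - x^2/2| = |0 + (-x)^(0+1)/(0+1) + (-x)^(1+1)/(1+1) + Real.log (1+x)| := by
    rw [← abs_neg]; congr 1; push_cast; ring
  rw [h5]; push_cast
  exact h.trans (by norm_num; exact h4)


lemma aux_max (ζ μ α : ℝ) (hζ0 : 0 < ζ) (hζ1 : ζ < 1) (hμ : 0 < μ) (hα : 0 < α) :
    IsMaxOn (fun ω => (1 - ζ) * Real.log ω - (1 - ζ) * ω + ζ * Real.log (ω / (ω + α * μ)))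
      (Set.Ioi 0)
      ((1 / 2) * (1 - α * μ + Real.sqrt ((α * μ - 1) ^ 2 + 4 * α * μ / (1 - ζ)))) := by
  have h1ζ : (0:ℝ) < 1 - ζ := by linarith
  rw [show 4 * α * μ / (1 - ζ) = 4 * (α * μ) / (1 - ζ) from by ring]
  set a := α * μ with ha
  have ha0 : 0 < a := mul_pos hα hμ
  set D := (a - 1) ^ 2 + 4 * a / (1 - ζ) with hD
  have hD0 : (0:ℝ) ≤ D := by positivity
  set s := Real.sqrt D with hs
  have hs2 : s ^ 2 = D := Real.sq_sqrt hD0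
  have hs1 : 1 ≤ s := by
    rw [hs]
    rw [show (1:ℝ) = Real.sqrt 1 from (Real.sqrt_one).symm]
    apply Real.sqrt_le_sqrt
    rw [hD]
    have h4a : 4 * a ≤ 4 * a / (1 - ζ) := by
      rw [le_div_iff₀ h1ζ]; nlinarith
    nlinarith [sq_nonneg (a + 1)]
  set W := (1 / 2) * (1 - a + s) with hW
  have hs_gt : a - 1 < s := by
    rcases le_or_gt a 1 with h | h
    · linarith
    · have h1 : Real.sqrt ((a - 1) ^ 2) < Real.sqrt D := by
        apply Real.sqrt_lt_sqrt (by positivity)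
        rw [hD]
        have : 0 < 4 * a / (1 - ζ) := by positivity
        linarith
      rwa [Real.sqrt_sq_eq_abs, abs_of_pos (by linarith : (0:ℝ) < a - 1)] at h1
  have hWpos : 0 < W := by rw [hW]; linarith
  have hkey : (1 - ζ) * (W ^ 2 + (a - 1) * W) = a := by
    have hs2' : (1 - ζ) * s ^ 2 = (1 - ζ) * (a - 1) ^ 2 + 4 * a := by
      rw [hs2, hD]; field_simp
    rw [hW]; nlinarith [hs2']
  have hω₁ : 1 - a - W < 0 := by rw [hW]; linarith
  -- the simplified function ψ
  set ψ : ℝ → ℝ := fun x => Real.log x - (1 - ζ) * x - ζ * Real.log (x + a) with hψ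
  have hEq : ∀ x : ℝ, 0 < x →
      (1 - ζ) * Real.log x - (1 - ζ) * x + ζ * Real.log (x / (x + a)) = ψ x := by
    intro x hx
    have hxa : 0 < x + a := by linarith
    rw [hψ]
    rw [Real.log_div hx.ne' hxa.ne']
    ring
  have hderiv : ∀ x : ℝ, 0 < x → HasDerivAt ψ (x⁻¹ - (1 - ζ) - ζ * (x + a)⁻¹) x := by
    intro x hx
    have hxa : 0 < x + a := by linarith
    have h1 : HasDerivAt Real.log x⁻¹ x := Real.hasDerivAt_log hx.ne'
    have h2 : HasDerivAt (fun y : ℝ => y + a) 1 x := (hasDerivAt_id x).add_const a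
    have h3 : HasDerivAt (fun y : ℝ => Real.log (y + a)) (1 / (x + a)) x := h2.log hxa.ne'
    have h4 : HasDerivAt (fun y : ℝ => (1 - ζ) * y) (1 - ζ) x := by
      simpa using (hasDerivAt_id x).const_mul (1 - ζ)
    have := (h1.sub h4).sub (h3.const_mul ζ)
    rw [show x⁻¹ - (1 - ζ) - ζ * (x + a)⁻¹ = x⁻¹ - (1 - ζ) - ζ * (1 / (x + a)) by ring]
    exact this
  have hsign : ∀ x : ℝ, 0 < x → x⁻¹ - (1 - ζ) - ζ * (x + a)⁻¹
      = (1 - ζ) * (W - x) * (x - (1 - a - W)) / (x * (x + a)) := by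
    intro x hx
    have hxa : 0 < x + a := by linarith
    field_simp
    nlinarith [hkey]
  intro x hx
  simp only [Set.mem_Ioi] at hx
  simp only [Set.mem_setOf_eq]
  rw [hEq x hx, hEq W hWpos]
  rcases lt_trichotomy x W with hlt | heq | hgt
  · have hmono : StrictMonoOn ψ (Icc x W) := by
      apply strictMonoOn_of_deriv_pos (convex_Icc x W)
      · intro y hy
        exact ((hderiv y (lt_of_lt_of_le hx hy.1)).continuousAt).continuousWithinAt
      · intro y hy
        rw [interior_Icc, mem_Ioo] at hy
        obtain ⟨hy1, hy2⟩ := hy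
        have hy0 : 0 < y := lt_trans hx hy1
        rw [(hderiv y hy0).deriv, hsign y hy0]
        have hya : 0 < y + a := by linarith
        apply div_pos
        · apply mul_pos (mul_pos h1ζ (by linarith)) (by linarith)
        · positivity
    exact le_of_lt (hmono ⟨le_rfl, hlt.le⟩ ⟨hlt.le, le_rfl⟩ hlt)
  · rw [heq]
  · have hanti : StrictAntiOn ψ (Icc W x) := by
      apply strictAntiOn_of_deriv_neg (convex_Icc W x)
      · intro y hy
        exact ((hderiv y (lt_of_lt_of_le hWpos hy.1)).continuousAt).continuousWithinAt
      · intro y hy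
        rw [interior_Icc, mem_Ioo] at hy
        obtain ⟨hy1, hy2⟩ := hy
        have hy0 : 0 < y := lt_trans hWpos hy1
        rw [(hderiv y hy0).deriv, hsign y hy0]
        have hya : 0 < y + a := by linarith
        apply div_neg_of_neg_of_pos
        · have hh1 : W - y < 0 := by linarith
          have hh2 : 0 < y - (1 - a - W) := by linarith
          exact mul_neg_of_neg_of_pos (mul_neg_of_pos_of_neg h1ζ hh1) hh2
        · positivity
    exact le_of_lt (hanti ⟨le_rfl, hgt.le⟩ ⟨hgt.le, le_rfl⟩ hgt)


private lemma hlp1 (a ζ : ℝ) (ha : 0 < a) (h1 : 0 < ζ) : 4*a*(1-ζ) < 4*a := by nlinarith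

private lemma hlp2 (a z : ℝ) (ha : 0 < a) (h4 : 4*a < z) : 1 ≤ (a-1)^2 + z := by
  nlinarith [sq_nonneg (a+1)]

private lemma hlp3 (s a X : ℝ) (hs0 : 0 ≤ s) (hs2 : s^2 = X) (hgt : (1+a)^2 < X)
    (ha : 0 < a) : 1 + a < s := by nlinarith

private lemma hlp4 (c : ℝ) (h : 1 < c) : 1 ≤ c^2 := by nlinarith

private lemma hlp5 (x y n : ℝ) (h : x * y = n) (hn : 0 ≤ n) (hy : 2 ≤ y) : 0 ≤ x := by
  nlinarith

private lemma hlp6 (α : ℝ) (h0 : 0 < α) (h1 : α ≤ 1) : α^2 ≤ α := by nlinarith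

lemma aux_bound (ζ μ : ℝ) (hζ0 : 0 < ζ) (hζ1 : ζ < 1) (hμ : 0 < μ) :
    ∃ C : ℝ, 0 < C ∧ ∃ ε : ℝ, 0 < ε ∧ ε ≤ 1 ∧ ∀ α ∈ Set.Ioo (0:ℝ) ε,
      |ζ - 1 - ((1 - ζ) * Real.log ((1 / 2) * (1 - α * μ + Real.sqrt ((α * μ - 1) ^ 2 + 4 * α * μ / (1 - ζ))))
          - (1 - ζ) * ((1 / 2) * (1 - α * μ + Real.sqrt ((α * μ - 1) ^ 2 + 4 * α * μ / (1 - ζ))))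
          + ζ * Real.log ((1 / 2) * (1 - α * μ + Real.sqrt ((α * μ - 1) ^ 2 + 4 * α * μ / (1 - ζ)))
              / ((1 / 2) * (1 - α * μ + Real.sqrt ((α * μ - 1) ^ 2 + 4 * α * μ / (1 - ζ))) + α * μ)))
        - α * ζ * μ + μ ^ 2 * ζ / (2 * (1 - ζ)) * α ^ 2| ≤ C * α ^ 3 := by
  have h1ζ : (0:ℝ) < 1 - ζ := by linarith
  set c : ℝ := (1 + ζ) / (1 - ζ) with hc
  have hc1 : 1 < c := by rw [hc, lt_div_iff₀ h1ζ]; linarith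
  have hc0 : 0 < c := by linarith
  set k1 : ℝ := ζ * μ / (1 - ζ) with hk1
  have hk10 : 0 < k1 := by rw [hk1]; exact div_pos (mul_pos hζ0 hμ) h1ζ
  set Cr : ℝ := c ^ 2 * μ ^ 2 / 4 with hCr
  have hCr0 : 0 < Cr := by
    rw [hCr]; exact div_pos (mul_pos (pow_pos hc0 2) (pow_pos hμ 2)) (by norm_num)
  set Ct : ℝ := k1 + Cr with hCt
  have hCt0 : 0 < Ct := by rw [hCt]; linarith
  set Cu : ℝ := Ct + μ with hCu
  have hCu0 : 0 < Cu := by rw [hCu]; linarith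
  clear_value c k1 Cr Ct Cu
  have hCpos : 0 < Cr * (k1 + ζ * (k1 + μ)) + Cr ^ 2 + 2 * Ct ^ 3 + 2 * Cu ^ 3 + 1 := by
    have h1 : 0 < Cr * (k1 + ζ * (k1 + μ)) :=
      mul_pos hCr0 (by linarith [mul_pos hζ0 (by linarith : (0:ℝ) < k1 + μ)])
    have h2 := pow_pos hCr0 2
    have h3 := pow_pos hCt0 3
    have h4 := pow_pos hCu0 3
    linarith
  refine ⟨Cr * (k1 + ζ * (k1 + μ)) + Cr ^ 2 + 2 * Ct ^ 3 + 2 * Cu ^ 3 + 1, hCpos,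
    min 1 (1 / (2 * Cu)), lt_min one_pos (div_pos one_pos (by linarith)),
    min_le_left _ _, ?_⟩
  intro α hα
  obtain ⟨hα0, hαε⟩ := hα
  have hα1 : α ≤ 1 := le_trans hαε.le (min_le_left _ _)
  have hαCu : Cu * α ≤ 1 / 2 := by
    have h := le_trans hαε.le (min_le_right _ _)
    have h2 : Cu * α ≤ Cu * (1 / (2 * Cu)) := mul_le_mul_of_nonneg_left h hCu0.le
    have h3 : Cu * (1 / (2 * Cu)) = 1 / 2 := by field_simp
    linarith
  rw [show 4 * α * μ / (1 - ζ) = 4 * (α * μ) / (1 - ζ) from by ring]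
  set a := α * μ with ha
  have ha0 : 0 < a := by rw [ha]; exact mul_pos hα0 hμ
  set D := (a - 1) ^ 2 + 4 * a / (1 - ζ) with hD
  have hquot : 0 < 4 * a / (1 - ζ) := div_pos (by linarith) h1ζ
  have hD0 : (0:ℝ) ≤ D := by rw [hD]; have := sq_nonneg (a - 1); linarith
  set s := Real.sqrt D with hs
  have hs2 : s ^ 2 = D := Real.sq_sqrt hD0
  have hs0 : 0 ≤ s := hs ▸ Real.sqrt_nonneg D
  have h4a : 4 * a < 4 * a / (1 - ζ) := by
    rw [lt_div_iff₀ h1ζ]; exact hlp1 a ζ ha0 hζ0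
  have hs1 : 1 ≤ s := by
    rw [hs, show (1:ℝ) = Real.sqrt 1 from (Real.sqrt_one).symm]
    apply Real.sqrt_le_sqrt
    rw [hD]; exact hlp2 a _ ha0 h4a
  clear_value s
  have hDgt : (1 + a) ^ 2 < D := by rw [hD]; linarith [h4a]
  have hsgt : 1 + a < s := hlp3 s a D hs0 hs2 hDgt ha0
  set t : ℝ := (s - 1 - a) / 2 with htdef
  have ht0 : 0 < t := by rw [htdef]; linarith
  set u : ℝ := t + a with hudef
  have hu0 : 0 < u := by rw [hudef]; linarith
  set r : ℝ := t - k1 * α with hrdef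
  -- |r| ≤ Cr α²
  have hDalt : D = 1 + 2 * c * a + a ^ 2 := by rw [hD, hc]; field_simp; ring
  have hsq2 : ((1 + c * a) - s) * (s + (1 + c * a)) = (c ^ 2 - 1) * a ^ 2 := by
    linear_combination -hs2 - hDalt
  have hca : 0 < c * a := mul_pos hc0 ha0
  have hspq : 2 ≤ s + (1 + c * a) := by linarith
  have hc2 : 1 ≤ c ^ 2 := hlp4 c hc1
  have hnum : (0:ℝ) ≤ (c ^ 2 - 1) * a ^ 2 := mul_nonneg (by linarith) (sq_nonneg a)
  have hqs : 0 ≤ (1 + c * a) - s := hlp5 _ _ _ hsq2 hnum hspq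
  have hqs2 : ((1 + c * a) - s) * 2 ≤ (c ^ 2 - 1) * a ^ 2 :=
    (mul_le_mul_of_nonneg_left hspq hqs).trans_eq hsq2
  have hr_eq : 2 * r = s - (1 + c * a) := by
    rw [hrdef, htdef, hk1, hc, ha]; field_simp; ring
  have hexp : (c ^ 2 - 1) * a ^ 2 = c ^ 2 * μ ^ 2 * α ^ 2 - μ ^ 2 * α ^ 2 := by
    rw [ha]; ring
  have h2Cr : 2 * (2 * (Cr * α ^ 2)) = c ^ 2 * μ ^ 2 * α ^ 2 := by rw [hCr]; ring
  have hμα2 : (0:ℝ) ≤ μ ^ 2 * α ^ 2 := by positivity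
  have hCrα : 0 ≤ Cr * α ^ 2 := mul_nonneg hCr0.le (sq_nonneg α)
  have hr_abs : |r| ≤ Cr * α ^ 2 := by
    rw [abs_le]
    constructor
    · linarith [hqs2]
    · linarith [hr_eq, hqs]
  clear_value r t u
  have ht_r : t = k1 * α + r := by rw [hrdef]; ring
  have hrle := abs_le.mp hr_abs
  have hα2 : α ^ 2 ≤ α := hlp6 α hα0 hα1
  have hCrαα : Cr * α ^ 2 ≤ Cr * α := mul_le_mul_of_nonneg_left hα2 hCr0.le
  have hCtα : Ct * α = k1 * α + Cr * α := by rw [hCt]; ring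
  have ht_le : t ≤ Ct * α := by linarith
  have hau : a = μ * α := by rw [ha]; ring
  have hCuα : Cu * α = Ct * α + μ * α := by rw [hCu]; ring
  have hu_le : u ≤ Cu * α := by rw [hudef]; linarith
  have hu_half : u ≤ 1 / 2 := le_trans hu_le hαCu
  have ht_half : t ≤ 1 / 2 := by rw [hudef] at hu_half; linarith
  -- rewrite the expression
  have hW1 : (1 / 2) * (1 - a + s) = 1 + t := by rw [htdef]; ring
  have h1t : (0:ℝ) < 1 + t := by linarith
  have h1ta : (0:ℝ) < 1 + t + a := by linarith
  have h1ta' : 1 + t + a = 1 + u := by rw [hudef]; ring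
  have hexpr : ζ - 1 - ((1 - ζ) * Real.log ((1 / 2) * (1 - a + s))
          - (1 - ζ) * ((1 / 2) * (1 - a + s))
          + ζ * Real.log ((1 / 2) * (1 - a + s) / ((1 / 2) * (1 - a + s) + a)))
        - α * ζ * μ + μ ^ 2 * ζ / (2 * (1 - ζ)) * α ^ 2
      = (t - Real.log (1 + t)) - ζ * (u - Real.log (1 + u))
        + μ ^ 2 * ζ / (2 * (1 - ζ)) * α ^ 2 := by
    rw [hW1, show (1:ℝ) + t + a = 1 + u from h1ta',
      Real.log_div h1t.ne' (h1ta' ▸ h1ta).ne']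
    linear_combination ζ * hudef + ζ * ha
  rw [hexpr]
  have hmaster : (t - Real.log (1 + t)) - ζ * (u - Real.log (1 + u))
        + μ ^ 2 * ζ / (2 * (1 - ζ)) * α ^ 2
      = (t - Real.log (1 + t) - t ^ 2 / 2) - ζ * (u - Real.log (1 + u) - u ^ 2 / 2)
        + r * α * (k1 - ζ * (k1 + μ)) + (1 - ζ) * r ^ 2 / 2 := by
    rw [hudef, hrdef, hk1, ha]
    field_simp
    ring
  rw [hmaster]
  have e1 : |t - Real.log (1 + t) - t ^ 2 / 2| ≤ 2 * t ^ 3 := log_taylor_bound ht0.le ht_half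
  have e2 : |u - Real.log (1 + u) - u ^ 2 / 2| ≤ 2 * u ^ 3 := log_taylor_bound hu0.le hu_half
  have e3 : |r * α * (k1 - ζ * (k1 + μ))| ≤ Cr * (k1 + ζ * (k1 + μ)) * α ^ 3 := by
    rw [abs_mul, abs_mul, abs_of_pos hα0]
    have hb : |k1 - ζ * (k1 + μ)| ≤ k1 + ζ * (k1 + μ) := by
      have h := abs_sub k1 (ζ * (k1 + μ))
      have h1 : |k1| = k1 := abs_of_pos hk10
      have h2 : |ζ * (k1 + μ)| = ζ * (k1 + μ) :=
        abs_of_pos (mul_pos hζ0 (by linarith))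
      linarith
    calc |r| * α * |k1 - ζ * (k1 + μ)|
        ≤ (Cr * α ^ 2) * α * (k1 + ζ * (k1 + μ)) := by
          apply mul_le_mul (mul_le_mul_of_nonneg_right hr_abs hα0.le) hb (abs_nonneg _)
          exact mul_nonneg hCrα hα0.le
      _ = Cr * (k1 + ζ * (k1 + μ)) * α ^ 3 := by ring
  have e4 : |(1 - ζ) * r ^ 2 / 2| ≤ Cr ^ 2 * α ^ 3 := by
    rw [abs_of_nonneg (div_nonneg (mul_nonneg h1ζ.le (sq_nonneg r)) (by norm_num))]
    have h1 : |r| ^ 2 ≤ (Cr * α ^ 2) ^ 2 := pow_le_pow_left₀ (abs_nonneg r) hr_abs 2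
    rw [sq_abs] at h1
    have heq : (Cr * α ^ 2) ^ 2 = Cr ^ 2 * α ^ 4 := by ring
    have h2 : α ^ 4 ≤ α ^ 3 := pow_le_pow_of_le_one hα0.le hα1 (by norm_num)
    have h3 : Cr ^ 2 * α ^ 4 ≤ Cr ^ 2 * α ^ 3 := mul_le_mul_of_nonneg_left h2 (sq_nonneg Cr)
    have h4 : 0 ≤ r ^ 2 * (1 + ζ) := mul_nonneg (sq_nonneg r) (by linarith)
    linarith [h1, heq, h3, h4]
  have e5 : t ^ 3 ≤ Ct ^ 3 * α ^ 3 := by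
    calc t ^ 3 ≤ (Ct * α) ^ 3 := pow_le_pow_left₀ ht0.le ht_le 3
      _ = Ct ^ 3 * α ^ 3 := by ring
  have e6 : u ^ 3 ≤ Cu ^ 3 * α ^ 3 := by
    calc u ^ 3 ≤ (Cu * α) ^ 3 := pow_le_pow_left₀ hu0.le hu_le 3
      _ = Cu ^ 3 * α ^ 3 := by ring
  have hα3 : (0:ℝ) < α ^ 3 := pow_pos hα0 3
  set X1 := t - Real.log (1 + t) - t ^ 2 / 2 with hX1
  set X2 := u - Real.log (1 + u) - u ^ 2 / 2 with hX2
  set X3 := r * α * (k1 - ζ * (k1 + μ)) with hX3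
  set X4 := (1 - ζ) * r ^ 2 / 2 with hX4
  have habs4 : |ζ * X2| = ζ * |X2| := by rw [abs_mul, abs_of_pos hζ0]
  have hζX2 : ζ * |X2| ≤ |X2| := mul_le_of_le_one_left (abs_nonneg X2) hζ1.le
  calc |X1 - ζ * X2 + X3 + X4|
      ≤ |X1 - ζ * X2 + X3| + |X4| := abs_add_le _ _
    _ ≤ (|X1 - ζ * X2| + |X3|) + |X4| := by linarith [abs_add_le (X1 - ζ * X2) X3]
    _ ≤ ((|X1| + ζ * |X2|) + |X3|) + |X4| := by
        linarith [abs_sub X1 (ζ * X2), habs4]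
    _ ≤ ((2 * t ^ 3 + 2 * u ^ 3) + Cr * (k1 + ζ * (k1 + μ)) * α ^ 3) + Cr ^ 2 * α ^ 3 := by
        have : ζ * |X2| ≤ 2 * u ^ 3 := le_trans hζX2 e2
        linarith [e1, e3, e4]
    _ ≤ (Cr * (k1 + ζ * (k1 + μ)) + Cr ^ 2 + 2 * Ct ^ 3 + 2 * Cu ^ 3 + 1) * α ^ 3 := by
        linarith [e5, e6, hα3]


/-- for `ζ ∈ (0,1)`, `μ > 0`, `δ ∈ (0,μ)`, and
`φ₊(ω) = (1-ζ)log ω - (1-ζ)ω + ζ log(ω/(ω+αμ))`, the function `φ₊` attains its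
maximum on `(0,∞)` at `ω₀⁺ = (1/2)(1 - αμ + √((αμ-1)² + 4αμ/(1-ζ)))`, and the
quantity `ζ - 1 - φ₊(ω₀⁺) - αζ(μ-δ)` equals `δζα - (μ²ζ/(2(1-ζ)))α² + O(α³)` as
`α → 0⁺`; in particular it is strictly positive for all sufficiently small
`α > 0`. -/
theorem stmt_18 (ζ μ δ : ℝ) (hζ : ζ ∈ Set.Ioo (0 : ℝ) 1) (hμ : 0 < μ)
    (hδ : 0 < δ) (hδμ : δ < μ) :
    let φ : ℝ → ℝ → ℝ := fun α ω =>
      (1 - ζ) * Real.log ω - (1 - ζ) * ω + ζ * Real.log (ω / (ω + α * μ))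
    let ω₀ : ℝ → ℝ := fun α =>
      (1 / 2) * (1 - α * μ + Real.sqrt ((α * μ - 1) ^ 2 + 4 * α * μ / (1 - ζ)))
    let g : ℝ → ℝ := fun α => ζ - 1 - φ α (ω₀ α) - α * ζ * (μ - δ)
    (∀ α : ℝ, 0 < α → IsMaxOn (φ α) (Set.Ioi 0) (ω₀ α)) ∧
    (fun α : ℝ => g α - (δ * ζ * α - μ ^ 2 * ζ / (2 * (1 - ζ)) * α ^ 2))
      =O[𝓝[>] (0 : ℝ)] (fun α : ℝ => α ^ 3) ∧
    ∀ᶠ α : ℝ in 𝓝[>] (0 : ℝ), 0 < g α := by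
  obtain ⟨hζ0, hζ1⟩ := hζ
  have h1ζ : (0:ℝ) < 1 - ζ := by linarith
  intro φ ω₀ g
  obtain ⟨C, hC, ε, hε0, hε1, hbound⟩ := aux_bound ζ μ hζ0 hζ1 hμ
  have hg_eq : ∀ α : ℝ, g α - (δ * ζ * α - μ ^ 2 * ζ / (2 * (1 - ζ)) * α ^ 2)
      = ζ - 1 - ((1 - ζ) * Real.log ((1 / 2) * (1 - α * μ + Real.sqrt ((α * μ - 1) ^ 2 + 4 * α * μ / (1 - ζ))))
          - (1 - ζ) * ((1 / 2) * (1 - α * μ + Real.sqrt ((α * μ - 1) ^ 2 + 4 * α * μ / (1 - ζ))))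
          + ζ * Real.log ((1 / 2) * (1 - α * μ + Real.sqrt ((α * μ - 1) ^ 2 + 4 * α * μ / (1 - ζ)))
              / ((1 / 2) * (1 - α * μ + Real.sqrt ((α * μ - 1) ^ 2 + 4 * α * μ / (1 - ζ))) + α * μ)))
        - α * ζ * μ + μ ^ 2 * ζ / (2 * (1 - ζ)) * α ^ 2 := by
    intro α
    simp only [g, φ, ω₀]
    ring
  refine ⟨fun α hα => aux_max ζ μ α hζ0 hζ1 hμ hα, ?_, ?_⟩
  · rw [Asymptotics.isBigO_iff]
    refine ⟨C, ?_⟩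
    filter_upwards [Ioo_mem_nhdsGT_of_mem (⟨le_rfl, hε0⟩ : (0:ℝ) ∈ Set.Ico 0 ε)] with α hα
    rw [Real.norm_eq_abs, Real.norm_eq_abs, hg_eq α,
      abs_of_pos (pow_pos hα.1 3)]
    exact hbound α hα
  · have hK : (0:ℝ) < μ ^ 2 * ζ / (2 * (1 - ζ)) :=
      div_pos (mul_pos (pow_pos hμ 2) hζ0) (by linarith)
    have hKC : (0:ℝ) < μ ^ 2 * ζ / (2 * (1 - ζ)) + C := by linarith
    set ε2 := min ε (δ * ζ / (μ ^ 2 * ζ / (2 * (1 - ζ)) + C)) with hε2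
    have hε20 : 0 < ε2 := lt_min hε0 (div_pos (mul_pos hδ hζ0) hKC)
    filter_upwards [Ioo_mem_nhdsGT_of_mem (⟨le_rfl, hε20⟩ : (0:ℝ) ∈ Set.Ico 0 ε2)] with α hα
    have hαε : α < ε := lt_of_lt_of_le hα.2 (min_le_left _ _)
    have hα1 : α ≤ 1 := le_trans hαε.le hε1
    have hb : |g α - (δ * ζ * α - μ ^ 2 * ζ / (2 * (1 - ζ)) * α ^ 2)| ≤ C * α ^ 3 := by
      rw [hg_eq α]; exact hbound α ⟨hα.1, hαε⟩
    obtain ⟨hb1, _⟩ := abs_le.mp hb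
    have h1 : α ^ 3 ≤ α ^ 2 := pow_le_pow_of_le_one hα.1.le hα1 (by norm_num)
    have h2 : C * α ^ 3 ≤ C * α ^ 2 := mul_le_mul_of_nonneg_left h1 hC.le
    have h3 : (μ ^ 2 * ζ / (2 * (1 - ζ)) + C) * α < δ * ζ := by
      have h := lt_of_lt_of_le hα.2 (min_le_right _ _)
      rw [lt_div_iff₀ hKC] at h
      linarith
    have h4 : (μ ^ 2 * ζ / (2 * (1 - ζ)) + C) * α * α < δ * ζ * α :=
      mul_lt_mul_of_pos_right h3 hα.1
    set K := μ ^ 2 * ζ / (2 * (1 - ζ)) with hKdef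
    clear_value K
    nlinarith [hb1, h2, h4]
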